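/- If a matching μ has a partial preimage H(μ) that is closed under weakly better replies under the man-proposing deferred acceptance mechanism, then μ is individually rational with respect to the true preferences. -/

import Mathlib

open scoped Classical

/-- A marriage problem's (strict) preference profile, given by injective rank
functions over potential partners plus the option `none` of staying single
(lower rank = more preferred). -/
structure Pref (M W : Type) where
  mrank : M → Option W → ℕ
  wrank : W → Option M → ℕ
  minj : ∀ a x y, mrank a x = mrank a y → x = y
  winj : ∀ b x y, wrank b x = wrank b y → x = y

/-- A one-to-one matching between `M` and `W` (with `none` = single). -/
structure Matching (M W : Type) where
  mu : M → Option W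
  nu : W → Option M
  consistent : ∀ a b, mu a = some b ↔ nu b = some a

/-- No player strictly prefers being single to the assigned partner. -/
def IndivRational {M W : Type} (P : Pref M W) (μ : Matching M W) : Prop :=
  (∀ a, ¬ P.mrank a none < P.mrank a (μ.mu a)) ∧
  (∀ b, ¬ P.wrank b none < P.wrank b (μ.nu b))

/-- The pair `(a, b)` blocks `μ`. -/
def Blocks {M W : Type} (P : Pref M W) (μ : Matching M W) (a : M) (b : W) : Prop :=
  P.mrank a (some b) < P.mrank a (μ.mu a) ∧ P.wrank b (some a) < P.wrank b (μ.nu b)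

/-- Stability: individual rationality together with absence of blocking pairs. -/
def StableMatching {M W : Type} (P : Pref M W) (μ : Matching M W) : Prop :=
  IndivRational P μ ∧ ∀ a b, ¬ Blocks P μ a b

noncomputable section

variable {M W : Type} [Fintype M] [Fintype W]

/-- `b` is acceptable to man `a`. -/
def mAcc (P : Pref M W) (a : M) (b : W) : Prop := P.mrank a (some b) < P.mrank a none

/-- `a` is acceptable to woman `b`. -/
def wAcc (P : Pref M W) (b : W) (a : M) : Prop := P.wrank b (some a) < P.wrank b none

/-- The state of the man-proposing deferred acceptance algorithm:
for each man, the index of the next woman on his list to propose to,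
and for each woman, the proposer she currently (tentatively) holds. -/
structure DAState (M W : Type) where
  next : M → ℕ
  hold : W → Option M

/-- A man is free if no woman currently holds him. -/
def IsFree (s : DAState M W) (a : M) : Prop := ∀ b, s.hold b ≠ some a

/-- The `k`-th woman (0-indexed) on man `a`'s list of acceptable women,
in decreasing order of preference. -/
def target (P : Pref M W) (a : M) (k : ℕ) : Option W :=
  if h : ∃ b : W, mAcc P a b ∧
      (Finset.univ.filter fun b' => mAcc P a b' ∧
        P.mrank a (some b') < P.mrank a (some b)).card = k
  then some h.choose else none

/-- Woman `b`'s most preferred acceptable man in the finite set `c` (if any). -/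
def best (P : Pref M W) (b : W) (c : Finset M) : Option M :=
  if h : ∃ a ∈ c, wAcc P b a ∧ ∀ a' ∈ c, wAcc P b a' → P.wrank b (some a) ≤ P.wrank b (some a')
  then some h.choose else none

/-- One round of the man-proposing deferred acceptance algorithm: every free
man proposes to the next woman on his list; every woman holds the best
acceptable man among her current proposers and the man she held before. -/
def daStep (P : Pref M W) (s : DAState M W) : DAState M W where
  next a := if IsFree s a ∧ (target P a (s.next a)).isSome then s.next a + 1 else s.next a
  hold b := best P b
    ((Finset.univ.filter fun a => IsFree s a ∧ target P a (s.next a) = some b) ∪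
      (s.hold b).toFinset)

/-- The algorithm terminates when no free man has anyone left to propose to. -/
def Finished (P : Pref M W) (s : DAState M W) : Prop :=
  ∀ a, IsFree s a → target P a (s.next a) = none

/-- Iterate the deferred acceptance rounds (with fuel). -/
def daRun (P : Pref M W) : ℕ → DAState M W → DAState M W
  | 0, s => s
  | n + 1, s => if Finished P s then s else daRun P n (daStep P s)

/-- The initial state: every man is free and about to propose to his favorite. -/
def daInit : DAState M W := ⟨fun _ => 0, fun _ => none⟩

/-- The final state of the man-proposing deferred acceptance algorithm
(the fuel is enough for the algorithm to have terminated). -/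
def daFinal (P : Pref M W) : DAState M W :=
  daRun P (Fintype.card M * (Fintype.card W + 1) + 1) daInit

/-- The partner of woman `b` under the man-proposing DA matching. -/
def daNu (P : Pref M W) (b : W) : Option M := (daFinal P).hold b

/-- The partner of man `a` under the man-proposing DA matching. -/
def daMu (P : Pref M W) (a : M) : Option W :=
  if h : ∃ b, (daFinal P).hold b = some a then some h.choose else none

/-- Man `a` proposes to woman `b` at some point during the run of the
man-proposing deferred acceptance algorithm. -/
def Proposes (P : Pref M W) (a : M) (b : W) : Prop :=
  ∃ n, IsFree (daRun P n daInit) a ∧ target P a ((daRun P n daInit).next a) = some b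

end

noncomputable section RevelationGame

variable (M W : Type) [Fintype M] [Fintype W] [DecidableEq M] [DecidableEq W]

/-- Pure strategies in the preference revelation game: a player submits a
strict ranking of the opposite side together with the option of being single. -/
abbrev Strat : M ⊕ W → Type := fun i =>
  match i with
  | Sum.inl _ => Option W ≃ Fin (Fintype.card W + 1)
  | Sum.inr _ => Option M ≃ Fin (Fintype.card M + 1)

instance instStratFintype : ∀ i : M ⊕ W, Fintype (Strat M W i)
  | Sum.inl _ => inferInstanceAs (Fintype (Option W ≃ Fin (Fintype.card W + 1)))
  | Sum.inr _ => inferInstanceAs (Fintype (Option M ≃ Fin (Fintype.card M + 1)))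

variable {M W}

/-- The preference profile induced by a report profile. -/
def reportPref (r : ∀ i : M ⊕ W, Strat M W i) : Pref M W where
  mrank a o := ((r (Sum.inl a)) o : ℕ)
  wrank b o := ((r (Sum.inr b)) o : ℕ)
  minj a _ _ h := (r (Sum.inl a)).injective (Fin.val_injective h)
  winj b _ _ h := (r (Sum.inr b)).injective (Fin.val_injective h)

/-- A mixed strategy profile: one probability distribution per player. -/
def IsMixed (x : ∀ i : M ⊕ W, Strat M W i → ℝ) : Prop :=
  ∀ i, (∀ h, 0 ≤ x i h) ∧ ∑ h, x i h = 1

/-- The mixed profile `x` is supported on the product set `H`. -/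
def SupportedOn (x : ∀ i : M ⊕ W, Strat M W i → ℝ)
    (H : ∀ i : M ⊕ W, Set (Strat M W i)) : Prop :=
  ∀ i h, x i h ≠ 0 → h ∈ H i

/-- Expected payoff to player `i` under a mixed strategy profile `x`. -/
def expPay (π : ∀ _ : M ⊕ W, (∀ j : M ⊕ W, Strat M W j) → ℝ) (i : M ⊕ W)
    (x : ∀ j : M ⊕ W, Strat M W j → ℝ) : ℝ :=
  ∑ s : ∀ j : M ⊕ W, Strat M W j, (∏ j, x j (s j)) * π i s

/-- The Dirac (pure) mixed strategy on `h`. -/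
def delta {i : M ⊕ W} (h : Strat M W i) : Strat M W i → ℝ :=
  fun t => if t = h then 1 else 0

/-- `H` is closed under weakly better replies: any pure strategy of a player
that earns at least the average payoff against some mixed profile supported on
`H` already belongs to the player's component of `H`. -/
def CUWBR (π : ∀ _ : M ⊕ W, (∀ j : M ⊕ W, Strat M W j) → ℝ)
    (H : ∀ i : M ⊕ W, Set (Strat M W i)) : Prop :=
  ∀ (i : M ⊕ W) (h : Strat M W i),
    (∃ x, IsMixed x ∧ SupportedOn x H ∧
      expPay π i x ≤ expPay π i (Function.update x i (delta h))) → h ∈ H i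

/-- Payoffs of the preference revelation game induced by the man-proposing
deferred acceptance algorithm: each player's payoff is a strictly decreasing
function of the true-preference rank of the partner assigned by DA run on the
reported profile. -/
def daPayoff (P : Pref M W) (um : M → ℕ → ℝ) (uw : W → ℕ → ℝ) :
    ∀ _ : M ⊕ W, (∀ j : M ⊕ W, Strat M W j) → ℝ := fun i r =>
  match i with
  | Sum.inl a => um a (P.mrank a (daMu (reportPref r) a))
  | Sum.inr b => uw b (P.wrank b (daNu (reportPref r) b))

end RevelationGame

section AuxDA

variable {M W : Type} [Fintype M] [Fintype W]

lemma target_mAcc {P : Pref M W} {a : M} {k : ℕ} {b : W}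
    (h : target P a k = some b) : mAcc P a b := by
  unfold target at h
  split at h
  · rename_i hex
    obtain ⟨h1, _⟩ := hex.choose_spec
    cases h
    exact h1
  · cases h

lemma best_spec {P : Pref M W} {b : W} {c : Finset M} {a : M}
    (h : best P b c = some a) : a ∈ c ∧ wAcc P b a := by
  unfold best at h
  split at h
  · rename_i hex
    obtain ⟨h1, h2, _⟩ := hex.choose_spec
    cases h
    exact ⟨h1, h2⟩
  · cases h

lemma step_not_held {P : Pref M W} {a : M} (hacc : ∀ b, ¬ mAcc P a b)
    {s : DAState M W} (hs : ∀ b, s.hold b ≠ some a) :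
    ∀ b, (daStep P s).hold b ≠ some a := by
  intro b hb
  obtain ⟨hmem, _⟩ := best_spec hb
  rcases Finset.mem_union.mp hmem with hm | hm
  · obtain ⟨-, -, htgt⟩ := Finset.mem_filter.mp hm
    exact hacc b (target_mAcc htgt)
  · refine hs b ?_
    simpa [Option.mem_toFinset] using hm

lemma run_not_held {P : Pref M W} {a : M} (hacc : ∀ b, ¬ mAcc P a b) :
    ∀ (n : ℕ) (s : DAState M W), (∀ b, s.hold b ≠ some a) →
      ∀ b, (daRun P n s).hold b ≠ some a
  | 0, s, hs => hs
  | n + 1, s, hs => by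
    rw [daRun]
    split
    · exact hs
    · exact run_not_held hacc n _ (step_not_held hacc hs)

lemma daMu_none {P : Pref M W} {a : M} (hacc : ∀ b, ¬ mAcc P a b) :
    daMu P a = none := by
  unfold daMu
  rw [dif_neg]
  rintro ⟨b, hb⟩
  exact run_not_held hacc _ daInit (fun b => by simp [daInit]) b hb

lemma step_hold_none {P : Pref M W} {b : W} (hacc : ∀ a, ¬ wAcc P b a)
    (s : DAState M W) : (daStep P s).hold b = none := by
  show best P b _ = none
  unfold best
  rw [dif_neg]
  rintro ⟨a, -, ha, -⟩
  exact hacc a ha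

lemma run_hold_none {P : Pref M W} {b : W} (hacc : ∀ a, ¬ wAcc P b a) :
    ∀ (n : ℕ) (s : DAState M W), s.hold b = none → (daRun P n s).hold b = none
  | 0, s, hs => hs
  | n + 1, s, hs => by
    rw [daRun]
    split
    · exact hs
    · exact run_hold_none hacc n _ (step_hold_none hacc s)

lemma daNu_none {P : Pref M W} {b : W} (hacc : ∀ a, ¬ wAcc P b a) :
    daNu P b = none :=
  run_hold_none hacc _ daInit rfl

end AuxDA

section AuxGame

variable {M W : Type} [Fintype M] [Fintype W] [DecidableEq M] [DecidableEq W]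

lemma isMixed_delta (r : ∀ i : M ⊕ W, Strat M W i) :
    IsMixed (fun j => delta (r j)) := by
  intro i
  constructor
  · intro t
    dsimp only [delta]
    split <;> norm_num
  · simp [delta]

lemma supportedOn_delta (r : ∀ i : M ⊕ W, Strat M W i)
    (H : ∀ i : M ⊕ W, Set (Strat M W i)) (hr : ∀ i, r i ∈ H i) :
    SupportedOn (fun j => delta (r j)) H := by
  intro j t ht
  have : t = r j := by
    by_contra hn
    simp [delta, hn] at ht
  exact this ▸ hr j

lemma expPay_delta (π : ∀ _ : M ⊕ W, (∀ j : M ⊕ W, Strat M W j) → ℝ)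
    (i : M ⊕ W) (r : ∀ j : M ⊕ W, Strat M W j) :
    expPay π i (fun j => delta (r j)) = π i r := by
  unfold expPay
  rw [Finset.sum_eq_single r]
  · simp [delta]
  · intro s _ hs
    obtain ⟨j, hj⟩ := Function.ne_iff.mp hs
    rw [Finset.prod_eq_zero (Finset.mem_univ j) (by simp [delta, hj]), zero_mul]
  · intro hmem
    exact absurd (Finset.mem_univ r) hmem

lemma update_delta (r : ∀ j : M ⊕ W, Strat M W j) (i : M ⊕ W) (h : Strat M W i) :
    Function.update (fun j => delta (r j)) i (delta h) =
      fun j => delta (Function.update r i h j) := by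
  funext j
  rcases eq_or_ne j i with rfl | hj
  · simp
  · simp [Function.update_of_ne hj]

end AuxGame

/-- If a matching `μ` has a partial preimage `H` that is closed
under weakly better replies in the preference revelation game induced by the
man-proposing deferred acceptance mechanism (with payoffs strictly decreasing in
true-preference rank), then `μ` is individually rational w.r.t. the true
preferences. -/
theorem cuwbr_indiv_rational {M W : Type} [Fintype M] [Fintype W]
    [DecidableEq M] [DecidableEq W] (P : Pref M W)
    (um : M → ℕ → ℝ) (uw : W → ℕ → ℝ)
    (hum : ∀ a x y, x < y → um a y < um a x)
    (huw : ∀ b x y, x < y → uw b y < uw b x)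
    (μ : Matching M W) (H : ∀ i : M ⊕ W, Set (Strat M W i))
    (hpp : ∀ r : ∀ i : M ⊕ W, Strat M W i, (∀ i, r i ∈ H i) →
      daMu (reportPref r) = μ.mu ∧ daNu (reportPref r) = μ.nu)
    (hne : ∃ r : ∀ i : M ⊕ W, Strat M W i, ∀ i, r i ∈ H i)
    (hcl : CUWBR (daPayoff P um uw) H) :
    IndivRational P μ := by
  obtain ⟨r, hr⟩ := hne
  constructor
  · intro a hlt
    let e : Option W ≃ Fin (Fintype.card W + 1) :=
      Fintype.equivFinOfCardEq (Fintype.card_option)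
    let h : Strat M W (Sum.inl a) := e.trans (Equiv.swap (e none) 0)
    have hnone : h none = 0 := Equiv.swap_apply_left _ _
    set r' : ∀ j : M ⊕ W, Strat M W j := Function.update r (Sum.inl a) h with hr'
    have hracc : ∀ b, ¬ mAcc (reportPref r') a b := by
      intro b hb
      have : ((r' (Sum.inl a)) (some b) : ℕ) < ((r' (Sum.inl a)) none : ℕ) := hb
      rw [hr', Function.update_self, hnone] at this
      exact Nat.not_lt_zero _ this
    have hmu' : daMu (reportPref r') a = none := daMu_none hracc
    have hmem : h ∈ H (Sum.inl a) := by
      refine hcl (Sum.inl a) h ⟨fun j => delta (r j), isMixed_delta r,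
        supportedOn_delta r H hr, ?_⟩
      rw [expPay_delta, update_delta, expPay_delta]
      show um a (P.mrank a (daMu (reportPref r) a)) ≤
        um a (P.mrank a (daMu (reportPref r') a))
      rw [(hpp r hr).1, hmu']
      exact le_of_lt (hum a _ _ hlt)
    have hr'H : ∀ j, r' j ∈ H j := by
      intro j
      rcases eq_or_ne j (Sum.inl a) with rfl | hj
      · rw [hr', Function.update_self]; exact hmem
      · rw [hr', Function.update_of_ne hj]; exact hr j
    have := (hpp r' hr'H).1
    rw [funext_iff] at this
    have hμ : μ.mu a = none := (this a).symm.trans hmu'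
    rw [hμ] at hlt
    exact lt_irrefl _ hlt
  · intro b hlt
    let e : Option M ≃ Fin (Fintype.card M + 1) :=
      Fintype.equivFinOfCardEq (Fintype.card_option)
    let h : Strat M W (Sum.inr b) := e.trans (Equiv.swap (e none) 0)
    have hnone : h none = 0 := Equiv.swap_apply_left _ _
    set r' : ∀ j : M ⊕ W, Strat M W j := Function.update r (Sum.inr b) h with hr'
    have hracc : ∀ a, ¬ wAcc (reportPref r') b a := by
      intro a ha
      have : ((r' (Sum.inr b)) (some a) : ℕ) < ((r' (Sum.inr b)) none : ℕ) := ha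
      rw [hr', Function.update_self, hnone] at this
      exact Nat.not_lt_zero _ this
    have hnu' : daNu (reportPref r') b = none := daNu_none hracc
    have hmem : h ∈ H (Sum.inr b) := by
      refine hcl (Sum.inr b) h ⟨fun j => delta (r j), isMixed_delta r,
        supportedOn_delta r H hr, ?_⟩
      rw [expPay_delta, update_delta, expPay_delta]
      show uw b (P.wrank b (daNu (reportPref r) b)) ≤
        uw b (P.wrank b (daNu (reportPref r') b))
      rw [(hpp r hr).2, hnu']
      exact le_of_lt (huw b _ _ hlt)
    have hr'H : ∀ j, r' j ∈ H j := by
      intro j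
      rcases eq_or_ne j (Sum.inr b) with rfl | hj
      · rw [hr', Function.update_self]; exact hmem
      · rw [hr', Function.update_of_ne hj]; exact hr j
    have := (hpp r' hr'H).2
    rw [funext_iff] at this
    have hμ : μ.nu b = none := (this b).symm.trans hnu'
    rw [hμ] at hlt
    exact lt_irrefl _ hlt
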